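/- Let α be a real number with (√7 − 1)/2 ≤ α ≤ (√13 − 1)/2 and α ≠ 1. Then for all nonnegative real numbers x and y with x² + y² ≤ 1, one has f_α(√(x² + y²)) ≤ f_α(x) + f_α(y). -/

import Mathlib

/-- The function `f_α` through which the Rényi-α entanglement of a two-qubit
state is expressed in terms of the concurrence. -/
noncomputable def fRenyi (α x : ℝ) : ℝ :=
  (1 / (1 - α)) *
    Real.logb 2 (((1 - Real.sqrt (1 - x)) / 2) ^ α + ((1 + Real.sqrt (1 - x)) / 2) ^ α)

set_option maxHeartbeats 1000000

open Real Set

/-- Key auxiliary inequality: `κ r - γ - κ r^β + γ r^(β+1) ≤ 0` on `(0,1]`. -/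
lemma aux_w_nonpos {β γ κ : ℝ} (hβ0 : 0 < β) (hγ0 : 0 < γ) (hγκ : γ < κ)
    (hconv : κ ^ 2 * (β - 1) ≤ γ ^ 2 * (β + 1)) {r : ℝ} (hr0 : 0 < r) (hr1 : r ≤ 1) :
    κ * r - γ - κ * r ^ β + γ * r ^ (β + 1) ≤ 0 := by
  have hκ0 : 0 < κ := hγ0.trans hγκ
  have hx0 : (0:ℝ) < γ / κ := by positivity
  -- the easy bound, valid for any `s ≤ γ/κ`
  have easy : ∀ s : ℝ, 0 < s → s ≤ γ / κ → κ * s - γ - κ * s ^ β + γ * s ^ (β + 1) ≤ 0 := by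
    intro s hs0 hsle
    have h1 : κ * s - γ ≤ 0 := by
      rw [le_div_iff₀ hκ0] at hsle
      nlinarith
    have h2 : γ * s ^ (β + 1) ≤ κ * s ^ β := by
      rw [rpow_add hs0]
      rw [rpow_one]
      have hsb : (0:ℝ) < s ^ β := rpow_pos_of_pos hs0 β
      have : γ * s ≤ κ := by
        rw [le_div_iff₀ hκ0] at hsle
        nlinarith
      nlinarith
    linarith
  rcases le_or_gt r (γ / κ) with hc | hc
  · exact easy r hr0 hc
  -- convexity region
  set w : ℝ → ℝ := fun s => κ * s - γ - κ * s ^ β + γ * s ^ (β + 1) with hw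
  have hDint : interior (Icc (γ/κ) 1) = Ioo (γ/κ) 1 := interior_Icc
  have hderiv1 : ∀ s : ℝ, s ≠ 0 → HasDerivAt w
      (κ - κ * (β * s ^ (β - 1)) + γ * ((β+1) * s ^ β)) s := by
    intro s hs0
    have h1 : HasDerivAt (fun u : ℝ => u ^ β) (β * s ^ (β - 1)) s :=
      Real.hasDerivAt_rpow_const (Or.inl hs0)
    have h2 : HasDerivAt (fun u : ℝ => u ^ (β+1)) ((β+1) * s ^ (β+1-1)) s :=
      Real.hasDerivAt_rpow_const (Or.inl hs0)
    rw [show β + 1 - 1 = β by ring] at h2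
    have h3 : HasDerivAt (fun u : ℝ => κ * u - γ) κ s := by
      simpa using ((hasDerivAt_id s).const_mul κ).sub_const γ
    exact (h3.sub (h1.const_mul κ)).add (h2.const_mul γ)
  have hderiv2 : ∀ s : ℝ, s ≠ 0 → HasDerivAt
      (fun s => κ - κ * (β * s ^ (β - 1)) + γ * ((β+1) * s ^ β))
      (- (κ * β) * ((β-1) * s ^ (β - 2)) + γ * (β+1) * (β * s ^ (β - 1))) s := by
    intro s hs0
    have h1 : HasDerivAt (fun u : ℝ => u ^ (β-1)) ((β-1) * s ^ (β - 1 - 1)) s :=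
      Real.hasDerivAt_rpow_const (Or.inl hs0)
    rw [show β - 1 - 1 = β - 2 by ring] at h1
    have h2 : HasDerivAt (fun u : ℝ => u ^ β) (β * s ^ (β - 1)) s :=
      Real.hasDerivAt_rpow_const (Or.inl hs0)
    have : HasDerivAt (fun s : ℝ => κ - κ * (β * s ^ (β-1)) + γ * ((β+1) * s ^ β))
        (0 - κ * (β * ((β-1) * s ^ (β-2))) + γ * ((β+1) * (β * s ^ (β-1)))) s := by
      exact ((hasDerivAt_const s κ).sub (((h1.const_mul β)).const_mul κ)).add
        ((h2.const_mul (β+1)).const_mul γ)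
    convert this using 1
    ring
  have hconvex : ConvexOn ℝ (Icc (γ/κ) 1) w := by
    apply convexOn_of_hasDerivWithinAt2_nonneg (convex_Icc _ _)
      (f' := fun s => κ - κ * (β * s ^ (β - 1)) + γ * ((β+1) * s ^ β))
      (f'' := fun s => - (κ * β) * ((β-1) * s ^ (β - 2)) + γ * (β+1) * (β * s ^ (β - 1)))
    · intro s hs
      have hs0 : 0 < s := hx0.trans_le hs.1
      exact (hderiv1 s hs0.ne').continuousAt.continuousWithinAt
    all_goals rw [hDint]
    · intro s hs; exact (hderiv1 s (hx0.trans hs.1).ne').hasDerivWithinAt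
    · intro s hs; exact (hderiv2 s (hx0.trans hs.1).ne').hasDerivWithinAt
    · intro s hs
      have hs0 : 0 < s := hx0.trans hs.1
      have key : κ * (β - 1) ≤ γ * (β+1) * s := by
        have h1 : γ / κ ≤ s := hs.1.le
        rw [div_le_iff₀ hκ0] at h1
        rcases le_or_gt β 1 with hb | hb
        · nlinarith [mul_pos (mul_pos hγ0 (by linarith : (0:ℝ) < β+1)) hs0]
        · -- κ²(β-1) ≤ γ²(β+1) ≤ γ(β+1)·κs
          nlinarith [mul_pos hγ0 (mul_pos (by linarith : (0:ℝ) < β + 1) hs0)]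
      have h2 : s ^ (β - 1) = s ^ (β-2) * s := by
        rw [← rpow_add_one hs0.ne' (β-2)]; ring_nf
      rw [h2]
      have hsp : (0:ℝ) < s ^ (β - 2) := rpow_pos_of_pos hs0 _
      nlinarith [mul_nonneg (by linarith : (0:ℝ) ≤ γ*(β+1)*s - κ*(β-1))
        (by positivity : (0:ℝ) ≤ β * s^(β-2))]
  have hw1 : w 1 = 0 := by simp [hw]
  have hwx : w (γ/κ) ≤ 0 := easy _ hx0 le_rfl
  have hseg : r ∈ segment ℝ (γ/κ) (1:ℝ) := by
    rw [segment_eq_Icc (by linarith [hc] : γ/κ ≤ 1)]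
    exact ⟨hc.le, hr1⟩
  have := hconvex.le_on_segment (x := γ/κ) (y := 1) (z := r)
    (left_mem_Icc.2 (by linarith)) (right_mem_Icc.2 (by linarith)) hseg
  calc w r ≤ max (w (γ/κ)) (w 1) := this
    _ ≤ 0 := by rw [hw1]; exact max_le hwx le_rfl

lemma aux_term2 {α κ p : ℝ} (hα0 : 0 < α) (hα2 : α < 2) (hακ : α < κ)
    (hconv : κ ^ 2 * ((2-α) - 1) ≤ (κ-α) ^ 2 * ((2-α) + 1))
    (hp0 : 0 < p) (hp : p ≤ 1/2) :
    ((α - κ) + (2*κ - α)*p) * p ^ (α-2) + ((2*κ - α)*p - κ) * (1-p) ^ (α-2) ≤ 0 := by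
  have hq0 : (0:ℝ) < 1 - p := by linarith
  set q : ℝ := 1 - p with hqdef
  set r : ℝ := p / q with hrdef
  have hr0 : 0 < r := div_pos hp0 hq0
  have hr1 : r ≤ 1 := (div_le_one hq0).2 (by simp [hqdef]; linarith)
  have hw := aux_w_nonpos (β := 2-α) (γ := κ-α) (κ := κ) (by linarith) (by linarith)
    (by linarith) hconv hr0 hr1
  have hrq : r * q = p := div_mul_cancel₀ p hq0.ne'
  have e1 : p ^ (α-2) = r ^ (α-2) * q ^ (α-2) := by
    rw [← hrq, mul_rpow hr0.le hq0.le]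
  have e2 : r ^ (α-2) * r ^ (2-α) = 1 := by
    rw [← rpow_add hr0]; norm_num
  have e3 : r ^ ((2-α)+1) = r ^ (2-α) * r := by rw [rpow_add hr0, rpow_one]
  have hA : (α - κ) + (2*κ - α)*p = q * (κ*r - (κ-α)) := by
    rw [show q*(κ*r-(κ-α)) = κ*(r*q) - (κ-α)*q from by ring, hrq, hqdef]; ring
  have hB : (2*κ - α)*p - κ = q * ((κ-α)*r - κ) := by
    rw [show q*((κ-α)*r-κ) = (κ-α)*(r*q) - κ*q from by ring, hrq, hqdef]; ring
  have inner_eq : r^(α-2) * (κ*r - (κ-α) - κ*r^(2-α) + (κ-α)*r^((2-α)+1))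
      = r^(α-2)*(κ*r-(κ-α)) + ((κ-α)*r - κ) := by
    rw [e3]
    linear_combination ((κ-α)*r - κ) * e2
  have expand : ((α - κ) + (2*κ - α)*p) * p ^ (α-2) + ((2*κ - α)*p - κ) * (1-p) ^ (α-2)
      = (q * q^(α-2)) * (r^(α-2) * (κ*r - (κ-α) - κ*r^(2-α) + (κ-α)*r^((2-α)+1))) := by
    rw [inner_eq, e1, hA, hB, ← hqdef]
    ring
  rw [expand]
  have h1 : (0:ℝ) ≤ q * q^(α-2) := by positivity
  have h2 : r^(α-2) * (κ*r - (κ-α) - κ*r^(2-α) + (κ-α)*r^((2-α)+1)) ≤ 0 :=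
    mul_nonpos_of_nonneg_of_nonpos (by positivity) hw
  exact mul_nonpos_of_nonneg_of_nonpos h1 h2

section Ederiv
variable (α κ : ℝ)

/-- The auxiliary function. -/
noncomputable def auxE (p : ℝ) : ℝ :=
  κ*(1-2*p) + ((α-κ) + (2*κ-α)*p) * p^α + ((2*κ-α)*p - κ) * (1-p)^α

noncomputable def auxE' (p : ℝ) : ℝ :=
  -(2*κ) + (2*κ-α)*(p^α + (1-p)^α)
    + α*(((α-κ) + (2*κ-α)*p) * p^(α-1) - ((2*κ-α)*p - κ)*(1-p)^(α-1))

noncomputable def auxE'' (p : ℝ) : ℝ :=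
  2*α*(2*κ-α)*(p^(α-1) - (1-p)^(α-1))
    + α*(α-1)*(((α-κ)+(2*κ-α)*p)*p^(α-2) + ((2*κ-α)*p-κ)*(1-p)^(α-2))

lemma auxE_cont (hα0 : 0 < α) : Continuous (auxE α κ) := by
  have h : Continuous (fun x : ℝ => x ^ α) :=
    continuous_iff_continuousAt.2 (fun x => Real.continuousAt_rpow_const x α (Or.inr hα0.le))
  apply Continuous.add
  apply Continuous.add
  · exact continuous_const.mul (continuous_const.sub (continuous_const.mul continuous_id))
  · exact (continuous_const.add (continuous_const.mul continuous_id)).mul h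
  · exact (((continuous_const.mul continuous_id).sub continuous_const).mul
      (h.comp (continuous_const.sub continuous_id)))

variable {p : ℝ}

lemma auxE_hasDeriv (hp0 : p ≠ 0) (hp1 : p ≠ 1) :
    HasDerivAt (auxE α κ) (auxE' α κ p) p := by
  have hq0 : (1:ℝ) - p ≠ 0 := sub_ne_zero.2 (Ne.symm hp1)
  have hq : HasDerivAt (fun u : ℝ => 1 - u) (-1) p := (hasDerivAt_id p).const_sub 1
  have h1 : HasDerivAt (fun u : ℝ => u ^ α) (α * p^(α-1)) p :=
    Real.hasDerivAt_rpow_const (Or.inl hp0)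
  have h2 : HasDerivAt (fun u : ℝ => (1-u) ^ α) (α * (1-p)^(α-1) * (-1)) p :=
    (Real.hasDerivAt_rpow_const (x := 1-p) (Or.inl hq0)).comp p hq
  have hl1 : HasDerivAt (fun u : ℝ => (α-κ) + (2*κ-α)*u) (2*κ-α) p := by
    simpa using ((hasDerivAt_id p).const_mul (2*κ-α)).const_add (α-κ)
  have hl2 : HasDerivAt (fun u : ℝ => (2*κ-α)*u - κ) (2*κ-α) p := by
    simpa using ((hasDerivAt_id p).const_mul (2*κ-α)).sub_const κ
  have hl0 : HasDerivAt (fun u : ℝ => κ*(1-2*u)) (κ * (-2)) p := by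
    simpa using (((hasDerivAt_id p).const_mul (2:ℝ)).const_sub 1).const_mul κ
  have := (hl0.add (hl1.mul h1)).add (hl2.mul h2)
  refine this.congr_deriv ?_
  simp only [auxE']
  ring

lemma auxE'_hasDeriv (hp0 : p ≠ 0) (hp1 : p ≠ 1) :
    HasDerivAt (auxE' α κ) (auxE'' α κ p) p := by
  have hq0 : (1:ℝ) - p ≠ 0 := sub_ne_zero.2 (Ne.symm hp1)
  have hq : HasDerivAt (fun u : ℝ => 1 - u) (-1) p := (hasDerivAt_id p).const_sub 1
  have h1 : HasDerivAt (fun u : ℝ => u ^ α) (α * p^(α-1)) p :=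
    Real.hasDerivAt_rpow_const (Or.inl hp0)
  have h2 : HasDerivAt (fun u : ℝ => (1-u) ^ α) (α * (1-p)^(α-1) * (-1)) p :=
    (Real.hasDerivAt_rpow_const (x := 1-p) (Or.inl hq0)).comp p hq
  have h3 : HasDerivAt (fun u : ℝ => u ^ (α-1)) ((α-1) * p^(α-1-1)) p :=
    Real.hasDerivAt_rpow_const (Or.inl hp0)
  have h4 : HasDerivAt (fun u : ℝ => (1-u) ^ (α-1)) ((α-1) * (1-p)^(α-1-1) * (-1)) p :=
    (Real.hasDerivAt_rpow_const (x := 1-p) (Or.inl hq0)).comp p hq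
  rw [show α-1-1 = α-2 by ring] at h3 h4
  have hl1 : HasDerivAt (fun u : ℝ => (α-κ) + (2*κ-α)*u) (2*κ-α) p := by
    simpa using ((hasDerivAt_id p).const_mul (2*κ-α)).const_add (α-κ)
  have hl2 : HasDerivAt (fun u : ℝ => (2*κ-α)*u - κ) (2*κ-α) p := by
    simpa using ((hasDerivAt_id p).const_mul (2*κ-α)).sub_const κ
  have := ((((h1.add h2).const_mul (2*κ-α)).const_add (-(2*κ))).add
    (((hl1.mul h3).sub (hl2.mul h4)).const_mul α))
  refine this.congr_deriv ?_
  simp only [auxE'']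
  ring

end Ederiv

/-- Core inequality for `α < 1`. -/
lemma core_lt {α p : ℝ} (hα0 : 0 < α) (hα1 : α < 1) (hp0 : 0 < p) (hp : p ≤ 1/2) :
    α*((1-p)*p^α - p*(1-p)^α) ≤ 2*(1-2*p)*(p^α + (1-p)^α - 1) := by
  have hint : interior (Icc (0:ℝ) (1/2)) = Ioo 0 (1/2) := interior_Icc
  have hconvex : ConvexOn ℝ (Icc (0:ℝ) (1/2)) (auxE α 2) := by
    apply convexOn_of_hasDerivWithinAt2_nonneg (convex_Icc _ _)
      (f' := auxE' α 2) (f'' := auxE'' α 2) ((auxE_cont α 2 hα0).continuousOn)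
    · rw [hint]; intro s hs
      exact (auxE_hasDeriv α 2 hs.1.ne' (by linarith [hs.2] : s ≠ 1)).hasDerivWithinAt
    · rw [hint]; intro s hs
      exact (auxE'_hasDeriv α 2 hs.1.ne' (by linarith [hs.2] : s ≠ 1)).hasDerivWithinAt
    · rw [hint]; intro s hs
      obtain ⟨hs0, hs2⟩ := hs
      have hq0 : (0:ℝ) < 1 - s := by linarith
      have t1 : (1-s)^(α-1) ≤ s^(α-1) :=
        Real.rpow_le_rpow_of_nonpos hs0 (by linarith) (by linarith)
      have t2 : ((α - 2) + (2*2 - α)*s) * s ^ (α-2) + ((2*2 - α)*s - 2) * (1-s) ^ (α-2) ≤ 0 := by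
        have := aux_term2 (α := α) (κ := 2) hα0 (by linarith) (by linarith)
          (by nlinarith) hs0 hs2.le
        convert this using 2 <;> ring
      have hm := mul_nonneg (neg_nonneg.2 (show α*(α-1) ≤ 0 by nlinarith)) (neg_nonneg.2 t2)
      rw [neg_mul_neg] at hm
      simp only [auxE'']
      nlinarith [mul_nonneg (mul_nonneg hα0.le (by linarith : (0:ℝ) ≤ 2*2-α)) (sub_nonneg.2 t1),
        hm]
  have hE0 : auxE α 2 0 = 0 := by
    simp [auxE, Real.zero_rpow hα0.ne', Real.one_rpow]
  have hEhalf : auxE α 2 (1/2) = 0 := by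
    have : auxE α 2 (1/2) = ((α-2) + (2*2-α)*(1/2) + ((2*2-α)*(1/2) - 2)) * ((1:ℝ)-1/2)^α
        + 2*(1-2*(1/2)) := by
      simp only [auxE]
      ring
    rw [this, show (α-2) + (2*2-α)*(1/2) + ((2*2-α)*(1/2) - 2) = (0:ℝ) from by ring]
    norm_num
  have hseg : p ∈ segment ℝ (0:ℝ) (1/2) := by
    rw [segment_eq_Icc (by norm_num : (0:ℝ) ≤ 1/2)]
    exact ⟨hp0.le, hp⟩
  have hle := hconvex.le_on_segment (left_mem_Icc.2 (by norm_num))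
    (right_mem_Icc.2 (by norm_num)) hseg
  rw [hE0, hEhalf, max_self] at hle
  have expand : α*((1-p)*p^α - p*(1-p)^α) - 2*(1-2*p)*(p^α + (1-p)^α - 1) = auxE α 2 p := by
    simp only [auxE]; ring
  linarith [hle, expand.ge, expand.le]

/-- Core inequality for `α > 1`. -/
lemma core_gt {α κ p : ℝ} (hα1 : 1 < α) (hα2 : α < 2) (hακ : α < κ) (hκ2 : κ ≤ 2)
    (hp0 : 0 < p) (hp : p ≤ 1/2) :
    κ*(1-2*p)*(p^α + (1-p)^α - 1) ≤ α*((1-p)*p^α - p*(1-p)^α) := by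
  have hα0 : (0:ℝ) < α := by linarith
  have h2κ : (0:ℝ) < 2*κ - α := by linarith
  set p₁ : ℝ := (κ-α)/(2*κ-α) with hp₁def
  have hp₁0 : 0 < p₁ := div_pos (by linarith) h2κ
  have hp₁half : p₁ < 1/2 := by
    rw [hp₁def, div_lt_iff₀ h2κ]; linarith
  have key : 0 ≤ auxE α κ p := by
    rcases le_or_gt p p₁ with hcase | hcase
    · -- trivial region
      have hq0 : (0:ℝ) < 1 - p := by linarith
      have hA : (α-κ) + (2*κ-α)*p ≤ 0 := by
        have : (2*κ-α)*p ≤ (2*κ-α)*p₁ := by nlinarith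
        have h1 : (2*κ-α)*p₁ = κ - α := by
          rw [hp₁def]; field_simp
        linarith
      have hB : (2*κ-α)*p - κ ≤ 0 := by nlinarith
      have hpα : p^α ≤ p := by
        have := Real.rpow_le_rpow_of_exponent_ge hp0 (by linarith : p ≤ 1) hα1.le
        rwa [Real.rpow_one] at this
      have hqα : (1-p)^α ≤ 1-p := by
        have := Real.rpow_le_rpow_of_exponent_ge hq0 (by linarith : 1-p ≤ 1) hα1.le
        rwa [Real.rpow_one] at this
      have e1 : ((α-κ) + (2*κ-α)*p) * p ≤ ((α-κ) + (2*κ-α)*p) * p^α :=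
        mul_le_mul_of_nonpos_left hpα hA
      have e2 : ((2*κ-α)*p - κ) * (1-p) ≤ ((2*κ-α)*p - κ) * (1-p)^α :=
        mul_le_mul_of_nonpos_left hqα hB
      have : κ*(1-2*p) + ((α-κ) + (2*κ-α)*p) * p + ((2*κ-α)*p - κ) * (1-p) = 0 := by ring
      simp only [auxE]
      linarith
    · -- concavity region
      have hint : interior (Icc p₁ (1/2:ℝ)) = Ioo p₁ (1/2) := interior_Icc
      have hconc : ConcaveOn ℝ (Icc p₁ (1/2:ℝ)) (auxE α κ) := by
        apply concaveOn_of_hasDerivWithinAt2_nonpos (convex_Icc _ _)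
          (f' := auxE' α κ) (f'' := auxE'' α κ) ((auxE_cont α κ hα0).continuousOn)
        · rw [hint]; intro s hs
          exact (auxE_hasDeriv α κ (hp₁0.trans hs.1).ne'
            (by linarith [hs.2] : s ≠ 1)).hasDerivWithinAt
        · rw [hint]; intro s hs
          exact (auxE'_hasDeriv α κ (hp₁0.trans hs.1).ne'
            (by linarith [hs.2] : s ≠ 1)).hasDerivWithinAt
        · rw [hint]; intro s hs
          obtain ⟨hs1, hs2⟩ := hs
          have hs0 : 0 < s := hp₁0.trans hs1
          have t1 : s^(α-1) ≤ (1-s)^(α-1) :=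
            Real.rpow_le_rpow hs0.le (by linarith) (by linarith)
          have t2 : ((α - κ) + (2*κ - α)*s) * s ^ (α-2) + ((2*κ - α)*s - κ) * (1-s) ^ (α-2) ≤ 0 :=
            aux_term2 hα0 hα2 hακ (by nlinarith) hs0 hs2.le
          simp only [auxE'']
          nlinarith [mul_nonneg (mul_nonneg (by linarith : (0:ℝ) ≤ 2*α) h2κ.le) (sub_nonneg.2 t1),
            mul_nonpos_of_nonneg_of_nonpos (by nlinarith : 0 ≤ α*(α-1)) t2]
      have hq₁ : (1:ℝ) - p₁ = κ/(2*κ-α) := by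
        rw [hp₁def, eq_div_iff h2κ.ne', sub_mul, div_mul_cancel₀ _ h2κ.ne']; ring
      have hq₁0 : 0 < (1:ℝ) - p₁ := by linarith
      have hq₁1 : (1:ℝ) - p₁ ≤ 1 := by linarith
      have hEp₁ : 0 ≤ auxE α κ p₁ := by
        have hA₁ : (α-κ) + (2*κ-α)*p₁ = 0 := by
          rw [hp₁def, mul_div_cancel₀ _ h2κ.ne']; ring
        have hB₁ : (2*κ-α)*p₁ - κ = -α := by
          rw [hp₁def, mul_div_cancel₀ _ h2κ.ne']; ring
        have hlin : κ*(1-2*p₁) = α*(1-p₁) := by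
          linear_combination (-1:ℝ) * hB₁
        have hqα : ((1:ℝ)-p₁)^α ≤ 1-p₁ := by
          have := Real.rpow_le_rpow_of_exponent_ge hq₁0 hq₁1 hα1.le
          rwa [Real.rpow_one] at this
        simp only [auxE]
        rw [hA₁, hB₁, hlin]
        nlinarith
      have hEhalf : auxE α κ (1/2) = 0 := by
        have : auxE α κ (1/2) = ((α-κ) + (2*κ-α)*(1/2) + ((2*κ-α)*(1/2) - κ)) * ((1:ℝ)-1/2)^α
            + κ*(1-2*(1/2)) := by
          simp only [auxE]
          ring
        rw [this, show (α-κ) + (2*κ-α)*(1/2) + ((2*κ-α)*(1/2) - κ) = (0:ℝ) from by ring]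
        norm_num
      have hseg : p ∈ segment ℝ p₁ (1/2:ℝ) := by
        rw [segment_eq_Icc hp₁half.le]
        exact ⟨hcase.le, hp⟩
      have hle := hconc.ge_on_segment (left_mem_Icc.2 hp₁half.le)
        (right_mem_Icc.2 hp₁half.le) hseg
      rw [hEhalf] at hle
      calc (0:ℝ) ≤ min (auxE α κ p₁) 0 := le_min hEp₁ le_rfl
        _ ≤ auxE α κ p := hle
  have expand : α*((1-p)*p^α - p*(1-p)^α) - κ*(1-2*p)*(p^α + (1-p)^α - 1) = auxE α κ p := by
    simp only [auxE]; ring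
  linarith [key, expand.ge, expand.le]

noncomputable def auxPsi (α p : ℝ) : ℝ :=
  (1/(1-α)) * Real.logb 2 (p^α + (1-p)^α) / (16*(p*(1-p))^2)

lemma auxPsi_antitoneOn {α : ℝ} (hα0 : 0 < α) (hα31 : α ≤ 1.31) (hαne : α ≠ 1) :
    AntitoneOn (auxPsi α) (Ioc (0:ℝ) (1/2)) := by
  have hlog2 : (0:ℝ) < Real.log 2 := Real.log_pos one_lt_two
  set C : ℝ := 1/((1-α) * Real.log 2) with hC
  set g : ℝ → ℝ := fun p => C * (Real.log (p^α + (1-p)^α) / (16*(p*(1-p))^2)) with hg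
  have h1α : (1:ℝ) - α ≠ 0 := sub_ne_zero.2 (Ne.symm hαne)
  have hψeq : ∀ p ∈ Ioc (0:ℝ) (1/2), auxPsi α p = g p := by
    intro p hp
    have hp0 : (0:ℝ) < p := hp.1
    have hq0 : (0:ℝ) < 1 - p := by have := hp.2; linarith
    have hD0 : (16*(p*(1-p))^2 : ℝ) ≠ 0 := by positivity
    simp only [auxPsi, g, Real.logb, hC]
    field_simp
    try ring
  have hmain : AntitoneOn g (Ioc (0:ℝ) (1/2)) := by
    have hint : interior (Ioc (0:ℝ) (1/2)) = Ioo 0 (1/2) := interior_Ioc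
    apply antitoneOn_of_hasDerivWithinAt_nonpos (convex_Ioc _ _)
      (f' := fun p => C * (((α*p^(α-1) - α*(1-p)^(α-1)) / (p^α + (1-p)^α) * (16*(p*(1-p))^2)
        - Real.log (p^α + (1-p)^α) * (32*(p*(1-p))*(1-2*p))) / ((16*(p*(1-p))^2)^2)))
    · -- continuity
      intro p hp
      have hp0 : 0 < p := hp.1
      have hq0 : (0:ℝ) < 1 - p := by
        have := hp.2; linarith
      have hσ0 : (0:ℝ) < p^α + (1-p)^α := by positivity
      have hD0 : (16*(p*(1-p))^2 : ℝ) ≠ 0 := by positivity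
      have hcσ : ContinuousAt (fun u : ℝ => u^α + (1-u)^α) p := by
        have h1 := Real.continuousAt_rpow_const p α (Or.inr hα0.le)
        have h2 : ContinuousAt (fun u : ℝ => (1-u)^α) p :=
          (Real.continuousAt_rpow_const (1-p) α (Or.inr hα0.le)).comp
            ((continuous_const.sub continuous_id).continuousAt)
        exact h1.add h2
      have : ContinuousAt g p := by
        apply ContinuousAt.mul continuousAt_const
        apply ContinuousAt.div
        · exact hcσ.log hσ0.ne'
        · fun_prop
        · exact hD0
      exact this.continuousWithinAt
    all_goals rw [hint]
    · -- derivative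
      intro p hp
      obtain ⟨hp0, hp2⟩ := hp
      have hq0 : (0:ℝ) < 1 - p := by linarith
      have hσ0 : (0:ℝ) < p^α + (1-p)^α := by positivity
      have hD0 : (16*(p*(1-p))^2 : ℝ) ≠ 0 := by positivity
      have hqd : HasDerivAt (fun u : ℝ => 1 - u) (-1) p := (hasDerivAt_id p).const_sub 1
      have h1 : HasDerivAt (fun u : ℝ => u ^ α) (α * p^(α-1)) p :=
        Real.hasDerivAt_rpow_const (Or.inl hp0.ne')
      have h2 : HasDerivAt (fun u : ℝ => (1-u) ^ α) (α * (1-p)^(α-1) * (-1)) p :=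
        (Real.hasDerivAt_rpow_const (x := 1-p) (Or.inl hq0.ne')).comp p hqd
      have hσ : HasDerivAt (fun u : ℝ => u^α + (1-u)^α) (α*p^(α-1) - α*(1-p)^(α-1)) p := by
        have := h1.add h2
        exact this.congr_deriv (by ring)
      have hlogσ : HasDerivAt (fun u : ℝ => Real.log (u^α + (1-u)^α))
          ((α*p^(α-1) - α*(1-p)^(α-1)) / (p^α + (1-p)^α)) p := hσ.log hσ0.ne'
      have hpq : HasDerivAt (fun u : ℝ => u*(1-u)) (1-2*p) p := by
        have := (hasDerivAt_id p).mul hqd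
        refine this.congr_deriv ?_
        simp only [id_eq]
        ring
      have hD : HasDerivAt (fun u : ℝ => 16*(u*(1-u))^2) (32*(p*(1-p))*(1-2*p)) p := by
        have := (hpq.pow 2).const_mul (16:ℝ)
        refine this.congr_deriv ?_
        ring
      have := (hlogσ.div hD hD0).const_mul C
      exact this.hasDerivWithinAt
    · -- sign of the derivative
      intro p hp
      obtain ⟨hp0, hp2⟩ := hp
      have hq0 : (0:ℝ) < 1 - p := by linarith
      have hd0 : (0:ℝ) ≤ 1 - 2*p := by linarith
      have hσ0 : (0:ℝ) < p^α + (1-p)^α := by positivity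
      have hD0 : (0:ℝ) < 16*(p*(1-p))^2 := by positivity
      set σ : ℝ := p^α + (1-p)^α with hσdef
      -- the numerator-like quantity
      have ep : p^(α-1) * p = p^α := by
        rw [← Real.rpow_add_one hp0.ne' (α-1)]; norm_num
      have eq' : (1-p)^(α-1) * (1-p) = (1-p)^α := by
        rw [← Real.rpow_add_one hq0.ne' (α-1)]; norm_num
      have expand : (α*p^(α-1) - α*(1-p)^(α-1)) * (16*(p*(1-p))^2)
          - Real.log σ * (32*(p*(1-p))*(1-2*p)) * σ
          = 16*(p*(1-p)) * (α*((1-p)*p^α - p*(1-p)^α) - 2*(1-2*p)*(σ * Real.log σ)) := by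
        linear_combination (16*α*p*(1-p)*(1-p)) * ep - (16*α*p*p*(1-p)) * eq'
      have hinner : (α*p^(α-1) - α*(1-p)^(α-1)) / σ * (16*(p*(1-p))^2)
          - Real.log σ * (32*(p*(1-p))*(1-2*p))
          = (16*(p*(1-p)) * (α*((1-p)*p^α - p*(1-p)^α)
              - 2*(1-2*p)*(σ * Real.log σ))) / σ := by
        rw [← expand]
        field_simp
        try ring
      rw [hinner]
      rcases lt_or_gt_of_ne hαne with hlt | hgt
      · -- α < 1 : C > 0, numerator ≤ 0
        have hCpos : 0 < C := by
          rw [hC]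
          have hd : 0 < (1-α) * Real.log 2 := mul_pos (by linarith) hlog2
          positivity
        have hneg : α*((1-p)*p^α - p*(1-p)^α) - 2*(1-2*p)*(σ * Real.log σ) ≤ 0 := by
          have hcore := core_lt hα0 hlt hp0 hp2.le
          rw [← hσdef] at hcore
          have hσ1 : 1 ≤ σ := by
            have e1 : p^(1:ℝ) ≤ p^α := Real.rpow_le_rpow_of_exponent_ge hp0 (by linarith) hlt.le
            have e2 : (1-p)^(1:ℝ) ≤ (1-p)^α :=
              Real.rpow_le_rpow_of_exponent_ge hq0 (by linarith) hlt.le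
            rw [Real.rpow_one] at e1 e2
            simp only [hσdef]; linarith
          have hlogge : σ - 1 ≤ σ * Real.log σ := by
            have h := Real.log_le_sub_one_of_pos (x := σ⁻¹) (by positivity)
            rw [Real.log_inv] at h
            have h2 := mul_le_mul_of_nonneg_left h (by positivity : (0:ℝ) ≤ σ)
            have h3 : σ * (σ⁻¹ - 1) = 1 - σ := by field_simp
            nlinarith
          linarith [mul_le_mul_of_nonneg_left hlogge (by linarith : (0:ℝ) ≤ 2*(1-2*p))]
        apply mul_nonpos_of_nonneg_of_nonpos hCpos.le
        apply div_nonpos_of_nonpos_of_nonneg _ (by positivity)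
        apply div_nonpos_of_nonpos_of_nonneg _ hσ0.le
        exact mul_nonpos_of_nonneg_of_nonpos (by positivity) hneg
      · -- α > 1 : C < 0, numerator ≥ 0
        have hCneg : C < 0 := by
          rw [hC]
          apply div_neg_of_pos_of_neg
          · norm_num
          · exact mul_neg_of_neg_of_pos (by linarith) hlog2
        have hα2 : α < 2 := by nlinarith
        set κ : ℝ := (2:ℝ)^(2-α) with hκdef
        have hκexp : κ = Real.exp (Real.log 2 * (2-α)) :=
          Real.rpow_def_of_pos (by norm_num) _
        have hκα : α < κ := by
          have h1 : Real.log 2 * (2-α) + 1 ≤ Real.exp (Real.log 2 * (2-α)) :=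
            Real.add_one_le_exp _
          have h3 : (0.6931471803 : ℝ) < Real.log 2 := Real.log_two_gt_d9
          have h4 : (0.69:ℝ) ≤ 2 - α := by linarith
          have h5 : (0.6931471803:ℝ)*(0.69) ≤ Real.log 2 * (2-α) :=
            mul_le_mul h3.le h4 (by norm_num) (le_of_lt (lt_trans (by norm_num) h3))
          rw [hκexp]
          linarith
        have hκ2 : κ ≤ 2 := by
          have := Real.rpow_le_rpow_of_exponent_le (by norm_num : (1:ℝ) ≤ 2)
            (by linarith : 2-α ≤ 1)
          rwa [Real.rpow_one] at this
        have hpos : 0 ≤ α*((1-p)*p^α - p*(1-p)^α) - 2*(1-2*p)*(σ * Real.log σ) := by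
          have hcore := core_gt hgt hα2 hκα hκ2 hp0 hp2.le
          rw [← hσdef] at hcore
          have hσ1 : σ ≤ 1 := by
            have e1 : p^α ≤ p^(1:ℝ) := Real.rpow_le_rpow_of_exponent_ge hp0 (by linarith) hgt.le
            have e2 : (1-p)^α ≤ (1-p)^(1:ℝ) :=
              Real.rpow_le_rpow_of_exponent_ge hq0 (by linarith) hgt.le
            rw [Real.rpow_one] at e1 e2
            simp only [hσdef]; linarith
          have hκ2σ : κ ≤ 2*σ := by
            have hcx := (convexOn_rpow hgt.le).2 (mem_Ici.2 hp0.le) (mem_Ici.2 hq0.le)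
              (by norm_num : (0:ℝ) ≤ 1/2) (by norm_num : (0:ℝ) ≤ 1/2) (by norm_num)
            simp only [smul_eq_mul] at hcx
            have hmid : (1/2:ℝ)*p + (1/2)*(1-p) = 1/2 := by ring
            rw [hmid] at hcx
            have h4 : κ = 4 * ((1/2:ℝ))^α := by
              rw [hκdef, Real.rpow_sub (by norm_num : (0:ℝ) < 2), one_div,
                Real.inv_rpow (by norm_num : (0:ℝ) ≤ 2)]
              rw [show (2:ℝ) = 1+1 by norm_num, Real.rpow_add (by norm_num : (0:ℝ) < 1+1),
                Real.rpow_one]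
              field_simp
              norm_num
            rw [h4]
            simp only [hσdef]
            linarith
          have hlog : Real.log σ ≤ σ - 1 := Real.log_le_sub_one_of_pos hσ0
          have e1 : 2*σ*(Real.log σ) ≤ 2*σ*(σ-1) :=
            mul_le_mul_of_nonneg_left hlog (by positivity)
          have e2 : 2*σ*(σ-1) ≤ κ*(σ-1) :=
            mul_le_mul_of_nonpos_right hκ2σ (by linarith : σ-1 ≤ 0)
          linarith [mul_le_mul_of_nonneg_left (e1.trans e2) hd0]
        apply mul_nonpos_of_nonpos_of_nonneg hCneg.le
        apply div_nonneg _ (by positivity)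
        apply div_nonneg _ hσ0.le
        exact mul_nonneg (by positivity) hpos
  intro a ha b hb hab
  rw [hψeq a ha, hψeq b hb]
  exact hmain ha hb hab

lemma fRenyi_sqrt_eq {α : ℝ} {u : ℝ} (hu0 : 0 < u) (hu1 : u ≤ 1) :
    fRenyi α (Real.sqrt u) = u * auxPsi α ((1 - Real.sqrt (1 - Real.sqrt u))/2) := by
  have ht0 : 0 < Real.sqrt u := Real.sqrt_pos.2 hu0
  have ht1 : Real.sqrt u ≤ 1 := Real.sqrt_le_one.mpr hu1
  set t : ℝ := Real.sqrt u with htdef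
  have hw0 : 0 ≤ Real.sqrt (1 - t) := Real.sqrt_nonneg _
  have hw2 : Real.sqrt (1-t) ^ 2 = 1 - t := Real.sq_sqrt (by linarith)
  set w : ℝ := Real.sqrt (1-t) with hwdef
  have ht2 : t ^ 2 = u := Real.sq_sqrt hu0.le
  have hP1 : 1 - (1-w)/2 = (1+w)/2 := by ring
  have hPP : 16*(((1-w)/2) * ((1+w)/2))^2 = u := by
    have e : ((1-w)/2) * ((1+w)/2) = (1 - w^2)/4 := by ring
    rw [e, hw2]
    rw [show (1-(1-t))/4 = t/4 by ring]
    rw [show 16*(t/4)^2 = t^2 by ring, ht2]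
  simp only [fRenyi, auxPsi, hP1, hPP]
  rw [← hwdef, mul_comm u, div_mul_cancel₀ _ hu0.ne']

lemma fRenyi_zero {α : ℝ} (hα0 : 0 < α) : fRenyi α 0 = 0 := by
  simp only [fRenyi, sub_zero, Real.sqrt_one]
  rw [show ((1:ℝ)-1)/2 = 0 by norm_num, show ((1:ℝ)+1)/2 = 1 by norm_num,
    Real.zero_rpow hα0.ne', Real.one_rpow]
  norm_num

lemma subadd_pos {α : ℝ} (hα0 : 0 < α) (hα31 : α ≤ 1.31) (hαne : α ≠ 1)
    {s t : ℝ} (hs : 0 < s) (ht : 0 < t) (hst : s + t ≤ 1) :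
    fRenyi α (Real.sqrt (s+t)) ≤ fRenyi α (Real.sqrt s) + fRenyi α (Real.sqrt t) := by
  have hP : ∀ u : ℝ, 0 < u → u ≤ 1 → (1 - Real.sqrt (1 - Real.sqrt u))/2 ∈ Ioc (0:ℝ) (1/2) := by
    intro u hu0 hu1
    constructor
    · have h1 : Real.sqrt u > 0 := Real.sqrt_pos.2 hu0
      have h2 : Real.sqrt u ≤ 1 := Real.sqrt_le_one.mpr hu1
      have h3 : Real.sqrt (1 - Real.sqrt u) < 1 := by
        have := Real.sqrt_lt_sqrt (by linarith) (show 1 - Real.sqrt u < 1 by linarith)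
        rwa [Real.sqrt_one] at this
      linarith
    · have := Real.sqrt_nonneg (1 - Real.sqrt u)
      linarith
  have hPmono : ∀ u v : ℝ, 0 ≤ u → u ≤ v →
      (1 - Real.sqrt (1 - Real.sqrt u))/2 ≤ (1 - Real.sqrt (1 - Real.sqrt v))/2 := by
    intro u v hu huv
    have h1 : Real.sqrt u ≤ Real.sqrt v := Real.sqrt_le_sqrt huv
    have h2 : Real.sqrt (1 - Real.sqrt v) ≤ Real.sqrt (1 - Real.sqrt u) :=
      Real.sqrt_le_sqrt (by linarith)
    linarith
  have hanti := auxPsi_antitoneOn hα0 hα31 hαne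
  have h1 := hanti (hP s hs (by linarith)) (hP (s+t) (by linarith) hst)
    (hPmono s (s+t) hs.le (by linarith))
  have h2 := hanti (hP t ht (by linarith)) (hP (s+t) (by linarith) hst)
    (hPmono t (s+t) ht.le (by linarith))
  rw [fRenyi_sqrt_eq hs (by linarith), fRenyi_sqrt_eq ht (by linarith),
    fRenyi_sqrt_eq (by linarith : (0:ℝ) < s+t) hst]
  have e1 := mul_le_mul_of_nonneg_left h1 hs.le
  have e2 := mul_le_mul_of_nonneg_left h2 ht.le
  nlinarith [e1, e2]

theorem fRenyi_subadditive (α : ℝ) (hα1 : (Real.sqrt 7 - 1) / 2 ≤ α)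
    (hα2 : α ≤ (Real.sqrt 13 - 1) / 2) (hα : α ≠ 1) (x y : ℝ)
    (hx : 0 ≤ x) (hy : 0 ≤ y) (hxy : x ^ 2 + y ^ 2 ≤ 1) :
    fRenyi α (Real.sqrt (x ^ 2 + y ^ 2)) ≤ fRenyi α x + fRenyi α y := by
  have h7 : (2:ℝ) ≤ Real.sqrt 7 := by
    nlinarith [Real.sq_sqrt (by norm_num : (0:ℝ) ≤ 7), Real.sqrt_nonneg 7]
  have h13 : Real.sqrt 13 ≤ 3.62 := by
    nlinarith [Real.sq_sqrt (by norm_num : (0:ℝ) ≤ 13), Real.sqrt_nonneg 13]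
  have hα0 : 0 < α := by linarith
  have hα31 : α ≤ 1.31 := by linarith
  rcases eq_or_lt_of_le hx with hx0 | hx0
  · rw [← hx0]
    rw [show (0:ℝ)^2 + y^2 = y^2 by ring, Real.sqrt_sq hy, fRenyi_zero hα0]
    linarith
  rcases eq_or_lt_of_le hy with hy0 | hy0
  · rw [← hy0]
    rw [show x^2 + (0:ℝ)^2 = x^2 by ring, Real.sqrt_sq hx, fRenyi_zero hα0]
    linarith
  have := subadd_pos hα0 hα31 hα (by positivity : (0:ℝ) < x^2) (by positivity : (0:ℝ) < y^2) hxy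
  rwa [Real.sqrt_sq hx, Real.sqrt_sq hy] at this
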